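/- For all c > 0 and 0 < δ < 1 with 1 - exp(-c) ≥ δ, there exists a unique r in the open-closed interval (δ, 1] such that r·(1 - exp(-c/r)) = δ. -/

import Mathlib

/-- For all `c > 0` and `0 < δ < 1` with `1 - exp(-c) ≥ δ`, there exists a unique
`r ∈ (δ, 1]` such that `r * (1 - exp(-c/r)) = δ`. -/
theorem exists_unique_root (c δ : ℝ) (hc : 0 < c) (hδ0 : 0 < δ) (hδ1 : δ < 1)
    (h : δ ≤ 1 - Real.exp (-c)) :
    ∃! r : ℝ, r ∈ Set.Ioc δ 1 ∧ r * (1 - Real.exp (-c / r)) = δ := by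
  set f : ℝ → ℝ := fun r => r * (1 - Real.exp (-c / r)) with hfdef
  have hcont : ContinuousOn f (Set.Icc δ 1) := by
    apply ContinuousOn.mul continuousOn_id
    apply ContinuousOn.sub continuousOn_const
    apply Real.continuous_exp.comp_continuousOn
    exact ContinuousOn.div continuousOn_const continuousOn_id
      (fun x hx => ne_of_gt (lt_of_lt_of_le hδ0 hx.1))
  have hderiv : ∀ r : ℝ, 0 < r →
      HasDerivAt f (1 - Real.exp (-c / r) * (1 + c / r)) r := by
    intro r hr
    have h1 : HasDerivAt (fun x : ℝ => -c / x) (c / r ^ 2) r := by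
      have := (hasDerivAt_inv hr.ne').const_mul (-c)
      have heq : (fun x : ℝ => -c * x⁻¹) = fun x : ℝ => -c / x := by
        ext x; ring
      rw [heq] at this
      convert this using 1
      case e'_4 => rfl
      case e'_5 => rfl
      field_simp
    have h3 := (hasDerivAt_id r).mul ((hasDerivAt_const r (1:ℝ)).sub h1.exp)
    convert h3 using 1
    case e'_4 => rfl
    case e'_5 => rfl
    case e'_8 => rfl
    simp only [Pi.sub_apply, id_eq]
    field_simp
    ring
  have hpos : ∀ r : ℝ, 0 < r → 0 < 1 - Real.exp (-c / r) * (1 + c / r) := by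
    intro r hr
    have hcr : 0 < c / r := div_pos hc hr
    have hlt : c / r + 1 < Real.exp (c / r) := Real.add_one_lt_exp (ne_of_gt hcr)
    have hexp : 0 < Real.exp (c / r) := Real.exp_pos _
    rw [neg_div, Real.exp_neg]
    rw [sub_pos, inv_mul_lt_iff₀ hexp]
    nlinarith
  have hmono : StrictMonoOn f (Set.Icc δ 1) := by
    apply strictMonoOn_of_deriv_pos (convex_Icc δ 1) hcont
    intro x hx
    rw [interior_Icc] at hx
    have hx0 : 0 < x := lt_trans hδ0 hx.1
    rw [(hderiv x hx0).deriv]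
    exact hpos x hx0
  have hfδ : f δ < δ := by
    have : Real.exp (-c / δ) > 0 := Real.exp_pos _
    have h1 : 1 - Real.exp (-c / δ) < 1 := by linarith
    calc f δ = δ * (1 - Real.exp (-c / δ)) := rfl
      _ < δ * 1 := by exact mul_lt_mul_of_pos_left h1 hδ0
      _ = δ := mul_one δ
  have hf1 : δ ≤ f 1 := by
    have : f 1 = 1 - Real.exp (-c) := by simp [hfdef]
    rw [this]; exact h
  obtain ⟨r, hrmem, hfr⟩ := intermediate_value_Icc (le_of_lt hδ1) hcont
    ⟨le_of_lt hfδ, hf1⟩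
  have hrδ : δ < r := by
    rcases lt_or_eq_of_le hrmem.1 with h' | h'
    · exact h'
    · exfalso; rw [← h'] at hfr; exact absurd hfr (ne_of_lt hfδ)
  refine ⟨r, ⟨⟨hrδ, hrmem.2⟩, hfr⟩, ?_⟩
  rintro r' ⟨⟨hr'1, hr'2⟩, hfr'⟩
  have : f r' = f r := by
    show r' * (1 - Real.exp (-c / r')) = f r
    rw [hfr, hfr']
  exact hmono.injOn ⟨le_of_lt hr'1, hr'2⟩ hrmem this
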